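/- Every fusible number z has a maximum-height representation; i.e., the set of heights of representations of z is finite (bounded above). -/

import Mathlib

/-- The set of fusible numbers. -/
inductive Fusible : ℝ → Prop
  | zero : Fusible 0
  | fuse (x y : ℝ) : Fusible x → Fusible y → |y - x| < 1 → Fusible ((x + y + 1) / 2)

/-- Full binary trees, used as representations of fusible numbers. -/
inductive RepTree where
  | leaf : RepTree
  | node (l r : RepTree) : RepTree

/-- The value of a representation: leaves are `0`, internal nodes fuse their children. -/
noncomputable def RepTree.val : RepTree → ℝ
  | .leaf => 0
  | .node l r => (l.val + r.val + 1) / 2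

/-- Validity of a representation: at every internal node, the children differ by less than 1. -/
def RepTree.Valid : RepTree → Prop
  | .leaf => True
  | .node l r => l.Valid ∧ r.Valid ∧ |r.val - l.val| < 1

/-- The height of a representation: length of the longest root-to-leaf path. -/
def RepTree.height : RepTree → ℕ
  | .leaf => 0
  | .node l r => max l.height r.height + 1

/-- `IsExp r n` means that the dyadic rational `r` has exponent `n`, i.e. `n` is the least
natural number such that `r = p / 2 ^ n` for an integer `p` (so that `p` is odd when `n ≥ 1`). -/
def IsExp (r : ℝ) (n : ℕ) : Prop :=
  (∃ p : ℤ, r = (p : ℝ) / 2 ^ n) ∧ ∀ m : ℕ, m < n → ¬ ∃ p : ℤ, r = (p : ℝ) / 2 ^ m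

open Filter Topology Bornology

lemma RepTree.val_nonneg : ∀ T : RepTree, 0 ≤ T.val
  | .leaf => le_refl 0
  | .node l r => by
    have hl := val_nonneg l; have hr := val_nonneg r
    simp only [RepTree.val]; linarith

lemma fusible_of_valid : ∀ T : RepTree, T.Valid → Fusible T.val
  | .leaf, _ => by simpa [RepTree.val] using Fusible.zero
  | .node l r, h => by
    obtain ⟨hl, hr, hd⟩ := h
    exact Fusible.fuse _ _ (fusible_of_valid l hl) (fusible_of_valid r hr) hd

lemma exists_tree_of_fusible {z : ℝ} (hz : Fusible z) :
    ∃ T : RepTree, T.Valid ∧ T.val = z := by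
  induction hz with
  | zero => exact ⟨.leaf, trivial, rfl⟩
  | fuse x y hx hy hd ihx ihy =>
    obtain ⟨L, hL, hLv⟩ := ihx; obtain ⟨R, hR, hRv⟩ := ihy
    refine ⟨.node L R, ⟨hL, hR, ?_⟩, ?_⟩
    · rw [hLv, hRv]; exact hd
    · simp [RepTree.val, hLv, hRv]

lemma fusible_nonneg {z : ℝ} (hz : Fusible z) : 0 ≤ z := by
  induction hz with
  | zero => exact le_refl 0
  | fuse x y hx hy hd ihx ihy => linarith

lemma fusible_decomp {z : ℝ} (hz : Fusible z) (h0 : z ≠ 0) :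
    ∃ x y, Fusible x ∧ Fusible y ∧ x ≤ y ∧ y - x < 1 ∧ z = (x + y + 1) / 2 := by
  cases hz with
  | zero => exact absurd rfl h0
  | fuse x y hx hy hd =>
    rw [abs_sub_lt_iff] at hd
    rcases le_total x y with h | h
    · exact ⟨x, y, hx, hy, h, hd.1, rfl⟩
    · exact ⟨y, x, hy, hx, h, hd.2, by ring⟩

def NoGapAbove (ℓ : ℝ) : Prop := ∀ ε > 0, ∃ v, Fusible v ∧ ℓ < v ∧ v < ℓ + ε

theorem not_noGapAbove (ℓ₀ : ℝ) : ¬ NoGapAbove ℓ₀ := by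
  intro hℓ₀
  set S : Set ℝ := {ℓ : ℝ | NoGapAbove ℓ} with hS
  have hSne : S.Nonempty := ⟨ℓ₀, hℓ₀⟩
  have hS0 : ∀ ℓ ∈ S, (0:ℝ) ≤ ℓ := by
    intro ℓ hℓ
    by_contra hneg
    push_neg at hneg
    obtain ⟨v, hv, h1, h2⟩ := hℓ (-ℓ) (by linarith)
    have := fusible_nonneg hv; linarith
  have hbdd : BddBelow S := ⟨0, fun ℓ hℓ => hS0 ℓ hℓ⟩
  set m := sInf S with hm
  have hm0 : 0 ≤ m := le_csInf hSne hS0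
  have hmS : NoGapAbove m := by
    intro ε hε
    obtain ⟨ℓ, hℓS, hℓlt⟩ := Real.lt_sInf_add_pos hSne (half_pos hε)
    obtain ⟨v, hv, h1, h2⟩ := hℓS (ε/2) (half_pos hε)
    exact ⟨v, hv, lt_of_le_of_lt (csInf_le hbdd hℓS) h1, by linarith⟩
  -- gap just above m - 1
  have hm1 : (m - 1) ∉ S := fun h => absurd (csInf_le hbdd h) (by linarith)
  rw [hS, Set.mem_setOf_eq, NoGapAbove] at hm1
  push_neg at hm1
  obtain ⟨ε₁, hε₁pos, hε₁⟩ := hm1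
  set ε' := min ε₁ (1/2) with hε'
  have hε'pos : 0 < ε' := lt_min hε₁pos (by norm_num)
  have hε'le : ε' ≤ ε₁ := min_le_left _ _
  have hε'half : ε' ≤ 1/2 := min_le_right _ _
  have hgap : ∀ v, Fusible v → m - 1 < v → m - 1 + ε' ≤ v := fun v hv h1 =>
    le_trans (by linarith) (hε₁ v hv h1)
  -- a sequence of fusible numbers decreasing to m from above
  have hzex : ∀ n : ℕ, ∃ v, Fusible v ∧ m < v ∧ v < m + min (ε'/2) (1/(n+1)) := by
    intro n
    refine hmS _ (lt_min (half_pos hε'pos) ?_)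
    positivity
  choose z hzf hzgt hzlt using hzex
  have hzlt2 : ∀ n, z n < m + ε'/2 := fun n =>
    lt_of_lt_of_le (hzlt n) (by have := min_le_left (ε'/2) (1/((n:ℝ)+1)); linarith)
  have hztend : Tendsto z atTop (𝓝 m) := by
    have h1 : Tendsto (fun n : ℕ => m + 1/((n:ℝ)+1)) atTop (𝓝 m) := by
      have := tendsto_one_div_add_atTop_nhds_zero_nat (𝕜 := ℝ)
      simpa using tendsto_const_nhds.add this
    refine tendsto_of_tendsto_of_tendsto_of_le_of_le tendsto_const_nhds h1
      (fun n => le_of_lt (hzgt n)) (fun n => ?_)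
    have := min_le_right (ε'/2) (1/((n:ℝ)+1))
    have := hzlt n
    push_cast at *
    linarith
  have hzne : ∀ n, z n ≠ 0 := fun n => ne_of_gt (lt_of_le_of_lt hm0 (hzgt n))
  choose x y hxf hyf hxy hyx hzeq using fun n => fusible_decomp (hzf n) (hzne n)
  -- basic bounds
  have hylt : ∀ n, y n < z n := fun n => by have := hyx n; have := hzeq n; linarith
  have hyge : ∀ n, z n - 1/2 ≤ y n := fun n => by have := hxy n; have := hzeq n; linarith
  have hxval : ∀ n, x n = 2 * z n - 1 - y n := fun n => by have := hzeq n; linarith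
  have hxle : ∀ n, x n ≤ z n - 1/2 := fun n => by have := hyge n; have := hxval n; linarith
  have hxgt : ∀ n, z n - 1 < x n := fun n => by have := hylt n; have := hxval n; linarith
  -- y n ≤ m
  have hym : ∀ n, y n ≤ m := by
    intro n
    by_contra hc
    push_neg at hc
    have h1 : x n < m - 1 + ε' := by
      have := hxval n; have := hzlt2 n; linarith
    have h2 : m - 1 < x n := by have := hxgt n; have := hzgt n; linarith
    exact absurd (hgap (x n) (hxf n) h2) (not_le.mpr h1)
  -- Bolzano-Weierstrass
  have hxmem : ∀ n, x n ∈ Set.Icc (0:ℝ) (m+1) := fun n =>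
    ⟨fusible_nonneg (hxf n), by have := hxle n; have := hzlt2 n; have := hε'pos; linarith⟩
  obtain ⟨a, -, φ, hφ, hxa⟩ := tendsto_subseq_of_bounded (Metric.isBounded_Icc (0:ℝ) (m+1)) hxmem
  have hymem : ∀ n, y (φ n) ∈ Set.Icc (0:ℝ) m := fun n =>
    ⟨fusible_nonneg (hyf (φ n)), hym (φ n)⟩
  obtain ⟨b, -, ψ, hψ, hyb⟩ := tendsto_subseq_of_bounded (Metric.isBounded_Icc (0:ℝ) m) hymem
  set σ : ℕ → ℕ := φ ∘ ψ with hσ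
  have hσmono : StrictMono σ := hφ.comp hψ
  have hX : Tendsto (fun k => x (σ k)) atTop (𝓝 a) := hxa.comp hψ.tendsto_atTop
  have hY : Tendsto (fun k => y (σ k)) atTop (𝓝 b) := hyb
  have hZ : Tendsto (fun k => z (σ k)) atTop (𝓝 m) := hztend.comp hσmono.tendsto_atTop
  have hab : a + b = 2 * m - 1 := by
    have h1 : Tendsto (fun k => x (σ k) + y (σ k)) atTop (𝓝 (a + b)) := hX.add hY
    have h2 : Tendsto (fun k => x (σ k) + y (σ k)) atTop (𝓝 (2 * m - 1)) := by
      have : (fun k => x (σ k) + y (σ k)) = fun k => 2 * z (σ k) - 1 := by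
        funext k; have := hzeq (σ k); linarith
      rw [this]
      have := hZ.const_mul 2
      simpa using this.sub_const 1
    exact tendsto_nhds_unique h1 h2
  have ham : a ≤ m - 1/2 := by
    have h2 : Tendsto (fun k => z (σ k) - 1/2) atTop (𝓝 (m - 1/2)) := hZ.sub_const _
    exact le_of_tendsto_of_tendsto' hX h2 (fun k => hxle (σ k))
  have hbm : b ≤ m := le_of_tendsto' hY (fun k => hym (σ k))
  -- dichotomies
  by_cases hfx : ∃ᶠ k in atTop, a < x (σ k)
  · have haS : NoGapAbove a := by
      intro ε hε
      have hev : ∀ᶠ k in atTop, x (σ k) < a + ε :=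
        hX.eventually (Filter.Tendsto.eventually_lt_const (by linarith) tendsto_id) |>.mono (fun k hk => hk)
      obtain ⟨k, hk1, hk2⟩ := (hfx.and_eventually hev).exists
      exact ⟨x (σ k), hxf (σ k), hk1, hk2⟩
    have := csInf_le hbdd haS
    linarith
  · rw [not_frequently] at hfx
    have hxev : ∀ᶠ k in atTop, x (σ k) ≤ a := hfx.mono (fun k hk => not_lt.mp hk)
    by_cases hfy : ∃ᶠ k in atTop, b < y (σ k)
    · have hbS : NoGapAbove b := by
        intro ε hε
        have hev : ∀ᶠ k in atTop, y (σ k) < b + ε :=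
          hY.eventually (Filter.Tendsto.eventually_lt_const (by linarith) tendsto_id) |>.mono (fun k hk => hk)
        obtain ⟨k, hk1, hk2⟩ := (hfy.and_eventually hev).exists
        exact ⟨y (σ k), hyf (σ k), hk1, hk2⟩
      have hbge : m ≤ b := csInf_le hbdd hbS
      have hbeq : b = m := le_antisymm hbm hbge
      have haeq : a = m - 1 := by rw [hbeq] at hab; linarith
      obtain ⟨k, hk⟩ := hxev.exists
      have := hxgt (σ k); have := hzgt (σ k)
      rw [haeq] at hk
      linarith
    · rw [not_frequently] at hfy
      have hyev : ∀ᶠ k in atTop, y (σ k) ≤ b := hfy.mono (fun k hk => not_lt.mp hk)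
      obtain ⟨k, hk1, hk2⟩ := (hxev.and hyev).exists
      have h1 : x (σ k) + y (σ k) = 2 * z (σ k) - 1 := by have := hzeq (σ k); linarith
      have := hzgt (σ k)
      linarith

/-- Values of children of valid representations of `z`. -/
def ChildSet (z : ℝ) : Set ℝ :=
  {v : ℝ | ∃ L R : RepTree, (RepTree.node L R).Valid ∧ (RepTree.node L R).val = z ∧
    (v = L.val ∨ v = R.val)}

lemma childSet_props {z : ℝ} {v : ℝ} (hv : v ∈ ChildSet z) :
    Fusible v ∧ Fusible (2*z - 1 - v) ∧ z - 1 < v ∧ v < z ∧ (2*z - 1 - v) ∈ ChildSet z := by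
  obtain ⟨L, R, hval, hz, hor⟩ := hv
  obtain ⟨hL, hR, hd⟩ := hval
  have hsum : L.val + R.val = 2*z - 1 := by
    simp only [RepTree.val] at hz; linarith
  rw [abs_sub_lt_iff] at hd
  have hfL := fusible_of_valid L hL
  have hfR := fusible_of_valid R hR
  rcases hor with h | h
  · subst h
    refine ⟨hfL, by rw [show 2*z-1-L.val = R.val by linarith]; exact hfR, by linarith, by linarith,
      L, R, ⟨hL, hR, abs_sub_lt_iff.mpr hd⟩, hz, Or.inr (by linarith)⟩
  · subst h
    refine ⟨hfR, by rw [show 2*z-1-R.val = L.val by linarith]; exact hfL, by linarith, by linarith,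
      L, R, ⟨hL, hR, abs_sub_lt_iff.mpr hd⟩, hz, Or.inl (by linarith)⟩

lemma childSet_finite (z : ℝ) : (ChildSet z).Finite := by
  by_contra hinf
  rw [← Set.not_infinite, not_not] at hinf
  set f := hinf.natEmbedding with hf
  set g : ℕ → ℝ := fun n => (f n : ℝ) with hg
  have hginj : Function.Injective g := by
    intro a b hab
    exact f.injective (Subtype.ext hab)
  have hgmem : ∀ n, g n ∈ ChildSet z := fun n => (f n).2
  have hgbd : ∀ n, g n ∈ Set.Icc (z-1) z := fun n =>
    ⟨le_of_lt (childSet_props (hgmem n)).2.2.1, le_of_lt (childSet_props (hgmem n)).2.2.2.1⟩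
  obtain ⟨p, -, φ, hφ, hgp⟩ := tendsto_subseq_of_bounded (Metric.isBounded_Icc (z-1) z) hgbd
  -- the subsequence is injective, hence eventually ≠ p
  have hsub : {n | g (φ n) = p}.Subsingleton := by
    intro a ha b hb
    exact hφ.injective (hginj (ha.trans hb.symm))
  have hev : ∀ᶠ n in atTop, g (φ n) ≠ p := by
    rw [← Nat.cofinite_eq_atTop]
    exact Set.Finite.eventually_cofinite_notMem hsub.finite
  have hfreq : (∃ᶠ n in atTop, g (φ n) < p) ∨ (∃ᶠ n in atTop, p < g (φ n)) := by
    rw [← frequently_or_distrib]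
    exact hev.frequently.mono (fun n hn => lt_or_gt_of_ne hn)
  rcases hfreq with hfr | hfr
  · -- partners accumulate from above at 2z-1-p
    apply not_noGapAbove (2*z - 1 - p)
    intro ε hε
    have htend : Tendsto (fun n => 2*z - 1 - g (φ n)) atTop (𝓝 (2*z - 1 - p)) :=
      (tendsto_const_nhds.sub hgp)
    have hevlt : ∀ᶠ n in atTop, 2*z - 1 - g (φ n) < 2*z - 1 - p + ε :=
      htend.eventually_lt_const (by linarith)
    have hfr2 : ∃ᶠ n in atTop, 2*z - 1 - p < 2*z - 1 - g (φ n) :=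
      hfr.mono (fun n hn => by linarith)
    obtain ⟨n, h1, h2⟩ := (hfr2.and_eventually hevlt).exists
    exact ⟨2*z - 1 - g (φ n), (childSet_props (hgmem (φ n))).2.1, h1, h2⟩
  · apply not_noGapAbove p
    intro ε hε
    have hevlt : ∀ᶠ n in atTop, g (φ n) < p + ε := hgp.eventually_lt_const (by linarith)
    obtain ⟨n, h1, h2⟩ := (hfr.and_eventually hevlt).exists
    exact ⟨g (φ n), (childSet_props (hgmem (φ n))).1, h1, h2⟩

/-- `z` has representations of unbounded height. -/
def Unb (z : ℝ) : Prop := ∀ n : ℕ, ∃ T : RepTree, T.Valid ∧ T.val = z ∧ n ≤ T.height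

lemma unb_descend {z : ℝ} (h : Unb z) : ∃ w, w < z ∧ Unb w := by
  by_contra hno
  push_neg at hno
  -- every w < z has bounded heights; get a bound for each
  classical
  set N : ℝ → ℕ := fun v =>
    if hv : ∃ n : ℕ, ∀ T : RepTree, T.Valid → T.val = v → T.height < n then hv.choose else 0
    with hN
  have hNspec : ∀ v, v < z → ∀ T : RepTree, T.Valid → T.val = v → T.height < N v := by
    intro v hvz
    have hnu := hno v hvz
    rw [Unb] at hnu
    push_neg at hnu
    obtain ⟨n, hn⟩ := hnu
    have hex : ∃ n : ℕ, ∀ T : RepTree, T.Valid → T.val = v → T.height < n :=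
      ⟨n, fun T h1 h2 => hn T h1 h2⟩
    intro T h1 h2
    rw [hN]
    simp only [dif_pos hex]
    exact hex.choose_spec T h1 h2
  set bound := (childSet_finite z).toFinset.sup N + 1 with hbound
  obtain ⟨T, hTv, hTval, hTh⟩ := h (bound + 1)
  cases T with
  | leaf => simp [RepTree.height] at hTh
  | node L R =>
    have hLR : max L.height R.height + 1 = (RepTree.node L R).height := rfl
    have hmax : bound ≤ max L.height R.height := by
      rw [← hLR] at hTh; omega
    -- pick the tall child
    rcases le_max_iff.mp hmax with hc | hc
    · have hmem : L.val ∈ ChildSet z := ⟨L, R, hTv, hTval, Or.inl rfl⟩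
      have hlt : L.val < z := (childSet_props hmem).2.2.2.1
      have := hNspec L.val hlt L hTv.1 rfl
      have hle : N L.val ≤ (childSet_finite z).toFinset.sup N :=
        Finset.le_sup ((childSet_finite z).mem_toFinset.mpr hmem)
      omega
    · have hmem : R.val ∈ ChildSet z := ⟨L, R, hTv, hTval, Or.inr rfl⟩
      have hlt : R.val < z := (childSet_props hmem).2.2.2.1
      have := hNspec R.val hlt R hTv.2.1 rfl
      have hle : N R.val ≤ (childSet_finite z).toFinset.sup N :=
        Finset.le_sup ((childSet_finite z).mem_toFinset.mpr hmem)
      omega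

lemma not_unb (z : ℝ) : ¬ Unb z := by
  intro h
  set S : Set ℝ := {w | Unb w} with hS
  have hSne : S.Nonempty := ⟨z, h⟩
  have hS0 : ∀ w ∈ S, (0:ℝ) ≤ w := by
    intro w hw
    obtain ⟨T, h1, h2, -⟩ := hw 0
    exact h2 ▸ fusible_nonneg (fusible_of_valid T h1)
  have hbdd : BddBelow S := ⟨0, hS0⟩
  set m := sInf S with hm
  have hmnot : m ∉ S := by
    intro hmS
    obtain ⟨w, hw1, hw2⟩ := unb_descend hmS
    exact absurd (csInf_le hbdd hw2) (not_le.mpr hw1)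
  apply not_noGapAbove m
  intro ε hε
  obtain ⟨w, hwS, hwlt⟩ := Real.lt_sInf_add_pos hSne hε
  have hwge : m ≤ w := csInf_le hbdd hwS
  have hwgt : m < w := lt_of_le_of_ne hwge (fun he => hmnot (he ▸ hwS))
  obtain ⟨T, h1, h2, -⟩ := hwS 0
  exact ⟨w, h2 ▸ fusible_of_valid T h1, hwgt, hwlt⟩

theorem exists_max_height_rep (z : ℝ) (hz : Fusible z) :
    ∃ T : RepTree, T.Valid ∧ T.val = z ∧
      ∀ T' : RepTree, T'.Valid → T'.val = z → T'.height ≤ T.height := by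
  obtain ⟨T₀, hT₀v, hT₀val⟩ := exists_tree_of_fusible hz
  have hnu := not_unb z
  rw [Unb] at hnu
  push_neg at hnu
  obtain ⟨n₀, hn₀⟩ := hnu
  set HS : Set ℕ := {n | ∃ T : RepTree, T.Valid ∧ T.val = z ∧ T.height = n} with hHS
  have hne : HS.Nonempty := ⟨T₀.height, T₀, hT₀v, hT₀val, rfl⟩
  have hbdd : BddAbove HS := by
    refine ⟨n₀, fun n hn => ?_⟩
    obtain ⟨T, h1, h2, h3⟩ := hn
    exact le_of_lt (h3 ▸ hn₀ T h1 h2)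
  obtain ⟨T, hv, hval, hh⟩ := Nat.sSup_mem hne hbdd
  exact ⟨T, hv, hval, fun T' h1 h2 => hh ▸ le_csSup hbdd ⟨T', h1, h2, rfl⟩⟩
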